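/- Let g be a perfect Lie algebra with trivial center over a field of characteristic 0, X = k⊕g, R the associated Yang–Baxter operator. If φ is a Yang–Baxter 2-cocycle for R, then the map α: g⊗g → k defined by α(x,y) = (π₀⊗π₀)φ((0,x)⊗(0,y)) (composed with multiplication k⊗k → k) satisfies the Lie algebra 2-cocycle condition with trivial coefficients: α([x,y],z) = α([x,z],y) + α(x,[y,z]) for all x,y,z ∈ g. -/

import Mathlib

open TensorProduct

noncomputable section

variable (k : Type*) [CommRing k] (L : Type*) [LieRing L] [LieAlgebra k L]

abbrev X := k × L

/-- The self-distributive operation `q((a,x)⊗(b,y)) = (ab, b•x + ⁅x,y⁆)` as a bilinear map. -/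
def qc : X k L →ₗ[k] X k L →ₗ[k] X k L :=
  LinearMap.mk₂ k (fun u v => (u.1 * v.1, v.1 • u.2 + ⁅u.2, v.2⁆))
    (fun m₁ m₂ n => by
      simp only [Prod.fst_add, Prod.snd_add, Prod.mk_add_mk, Prod.mk.injEq]
      exact ⟨by ring, by rw [smul_add, add_lie]; abel⟩)
    (fun c m n => by
      simp only [Prod.smul_fst, Prod.smul_snd, Prod.smul_mk, smul_eq_mul, Prod.mk.injEq]
      exact ⟨by ring, by rw [smul_lie, smul_comm n.1 c, smul_add]⟩)
    (fun m n₁ n₂ => by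
      simp only [Prod.fst_add, Prod.snd_add, Prod.mk_add_mk, Prod.mk.injEq]
      exact ⟨by ring, by rw [add_smul, lie_add]; abel⟩)
    (fun c m n => by
      simp only [Prod.smul_fst, Prod.smul_snd, Prod.smul_mk, smul_eq_mul, Prod.mk.injEq]
      exact ⟨by ring, by rw [lie_smul, smul_add, mul_smul]⟩)

/-- The comultiplication `Δ(a,x) = (a,x)⊗(1,0) + (1,0)⊗(0,x)`. -/
def Delta : X k L →ₗ[k] X k L ⊗[k] X k L where
  toFun u := u ⊗ₜ (1, 0) + (1, 0) ⊗ₜ ((0 : k), u.2)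
  map_add' u v := by
    rw [show ((0 : k), (u + v).2) = ((0 : k), u.2) + ((0 : k), v.2) by
      simp [Prod.mk_add_mk]]
    rw [add_tmul, tmul_add]; abel
  map_smul' c u := by
    rw [show ((0 : k), (c • u).2) = c • ((0 : k), u.2) by simp [Prod.smul_mk],
      tmul_smul]
    simp [smul_add, smul_tmul']

/-- The counit `ε(a,x) = a`. -/
def eps : X k L →ₗ[k] k := LinearMap.fst k k L

/-- The Yang-Baxter operator `R(u ⊗ v) = v^{(1)} ⊗ q(u ⊗ v^{(2)})` associated to the
Lie algebra `L`. -/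
def Rop : X k L ⊗[k] X k L →ₗ[k] X k L ⊗[k] X k L :=
  TensorProduct.lift <| LinearMap.mk₂ k
    (fun u v => (LinearMap.lTensor (X k L) (qc k L u)) (Delta k L v))
    (fun u₁ u₂ v => by simp [map_add, LinearMap.lTensor_add, LinearMap.add_apply])
    (fun c u v => by simp [map_smul, LinearMap.lTensor_smul, LinearMap.smul_apply])
    (fun u v₁ v₂ => by simp)
    (fun c u v => by simp)

variable {k}

/-- `F ⊗ 1` acting on the first two factors of `V ⊗ (V ⊗ V)`. -/
def map12 {V : Type*} [AddCommGroup V] [Module k V]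
    (F : V ⊗[k] V →ₗ[k] V ⊗[k] V) :
    V ⊗[k] (V ⊗[k] V) →ₗ[k] V ⊗[k] (V ⊗[k] V) :=
  (TensorProduct.assoc k V V V).toLinearMap ∘ₗ F.rTensor V ∘ₗ
    (TensorProduct.assoc k V V V).symm.toLinearMap

/-- `1 ⊗ F` acting on the last two factors of `V ⊗ (V ⊗ V)`. -/
def map23 {V : Type*} [AddCommGroup V] [Module k V]
    (F : V ⊗[k] V →ₗ[k] V ⊗[k] V) :
    V ⊗[k] (V ⊗[k] V) →ₗ[k] V ⊗[k] (V ⊗[k] V) :=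
  F.lTensor V

/-- The Yang-Baxter equation for an operator `F : V ⊗ V → V ⊗ V`. -/
def YBE {V : Type*} [AddCommGroup V] [Module k V]
    (F : V ⊗[k] V →ₗ[k] V ⊗[k] V) : Prop :=
  map12 F ∘ₗ map23 F ∘ₗ map12 F = map23 F ∘ₗ map12 F ∘ₗ map23 F

/-- The second Yang-Baxter differential. -/
def dYB {V : Type*} [AddCommGroup V] [Module k V]
    (R φ : V ⊗[k] V →ₗ[k] V ⊗[k] V) :
    V ⊗[k] (V ⊗[k] V) →ₗ[k] V ⊗[k] (V ⊗[k] V) :=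
  map12 R ∘ₗ map23 R ∘ₗ map12 φ + map12 R ∘ₗ map23 φ ∘ₗ map12 R +
    map12 φ ∘ₗ map23 R ∘ₗ map12 R - map23 R ∘ₗ map12 R ∘ₗ map23 φ -
    map23 R ∘ₗ map12 φ ∘ₗ map23 R - map23 φ ∘ₗ map12 R ∘ₗ map23 R

/-- The first Yang-Baxter differential. -/
def dYB1 {V : Type*} [AddCommGroup V] [Module k V]
    (R : V ⊗[k] V →ₗ[k] V ⊗[k] V) (f : V →ₗ[k] V) :
    V ⊗[k] V →ₗ[k] V ⊗[k] V :=
  R ∘ₗ f.rTensor V + R ∘ₗ f.lTensor V - f.rTensor V ∘ₗ R - f.lTensor V ∘ₗ R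

end

open TensorProduct

/-- The scalar part of a YB 2-cocycle:
`α(x,y) = mult ∘ (π₀⊗π₀) (φ((0,x)⊗(0,y)))`. -/
noncomputable def alphaOf {k : Type*} [Field k] {L : Type*} [LieRing L] [LieAlgebra k L]
    (φ : X k L ⊗[k] X k L →ₗ[k] X k L ⊗[k] X k L) (x y : L) : k :=
  LinearMap.mul' k k
    (TensorProduct.map (LinearMap.fst k k L) (LinearMap.fst k k L)
      (φ ((((0 : k), x) : X k L) ⊗ₜ[k] (((0 : k), y) : X k L))))

section Aux

variable {k : Type*} [CommRing k] {L : Type*} [LieRing L] [LieAlgebra k L]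

/-- `ε ⊗ ε` followed by multiplication. -/
noncomputable def e2 : X k L ⊗[k] X k L →ₗ[k] k :=
  LinearMap.mul' k k ∘ₗ TensorProduct.map (eps k L) (eps k L)

/-- `ε ⊗ ε ⊗ ε` followed by multiplication. -/
noncomputable def e3 : X k L ⊗[k] (X k L ⊗[k] X k L) →ₗ[k] k :=
  LinearMap.mul' k k ∘ₗ TensorProduct.map (eps k L) e2

@[simp] lemma e2_tmul (u v : X k L) : e2 (u ⊗ₜ[k] v) = u.1 * v.1 := rfl

@[simp] lemma e3_tmul (u : X k L) (s : X k L ⊗[k] X k L) :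
    e3 (u ⊗ₜ[k] s) = u.1 * e2 s := rfl

lemma Rop_tmul (u v : X k L) :
    Rop k L (u ⊗ₜ[k] v)
      = v ⊗ₜ[k] u + (((1 : k), (0 : L)) : X k L) ⊗ₜ[k] (((0 : k), ⁅u.2, v.2⁆) : X k L) := by
  show (LinearMap.lTensor (X k L) (qc k L u)) (Delta k L v) = _
  rw [show Delta k L v = v ⊗ₜ[k] (((1 : k), (0 : L)) : X k L)
      + (((1 : k), (0 : L)) : X k L) ⊗ₜ[k] (((0 : k), v.2) : X k L) from rfl]
  rw [map_add, LinearMap.lTensor_tmul, LinearMap.lTensor_tmul]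
  congr 1
  · congr 1
    show ((u.1 * 1, (1 : k) • u.2 + ⁅u.2, (0 : L)⁆) : X k L) = u
    simp
  · congr 1
    show (((u.1 * 0 : k), (0 : k) • u.2 + ⁅u.2, v.2⁆) : X k L) = _
    simp

lemma e2_Rop : (e2 ∘ₗ Rop k L : X k L ⊗[k] X k L →ₗ[k] k) = e2 := by
  apply TensorProduct.ext'
  intro u v
  simp [Rop_tmul, mul_comm]

lemma e3_assoc (s : X k L ⊗[k] X k L) (c : X k L) :
    e3 ((TensorProduct.assoc k (X k L) (X k L) (X k L)) (s ⊗ₜ[k] c)) = e2 s * c.1 := by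
  induction s using TensorProduct.induction_on with
  | zero => rw [zero_tmul, LinearEquiv.map_zero, map_zero, map_zero, zero_mul]
  | tmul u v => simp [mul_assoc]
  | add s t hs ht =>
      rw [add_tmul, LinearEquiv.map_add, map_add, map_add, add_mul, hs, ht]

lemma e3_map12 (F : X k L ⊗[k] X k L →ₗ[k] X k L ⊗[k] X k L) (u v w : X k L) :
    e3 (map12 F (u ⊗ₜ[k] (v ⊗ₜ[k] w))) = e2 (F (u ⊗ₜ[k] v)) * w.1 := by
  have : map12 F (u ⊗ₜ[k] (v ⊗ₜ[k] w))
      = (TensorProduct.assoc k (X k L) (X k L) (X k L)) ((F (u ⊗ₜ[k] v)) ⊗ₜ[k] w) := by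
    simp [map12, LinearMap.rTensor_tmul]
  rw [this, e3_assoc]

lemma e3_map23 (F : X k L ⊗[k] X k L →ₗ[k] X k L ⊗[k] X k L) (u : X k L)
    (s : X k L ⊗[k] X k L) :
    e3 (map23 F (u ⊗ₜ[k] s)) = u.1 * e2 (F s) := by
  rw [show map23 F (u ⊗ₜ[k] s) = u ⊗ₜ[k] (F s) from rfl, e3_tmul]

lemma e3_map23_Rop (t : X k L ⊗[k] (X k L ⊗[k] X k L)) :
    e3 (map23 (Rop k L) t) = e3 t := by
  induction t using TensorProduct.induction_on with
  | zero => simp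
  | tmul u s =>
      rw [e3_map23, ← LinearMap.comp_apply, e2_Rop, e3_tmul]
  | add s t hs ht => simp only [map_add, hs, ht]

lemma e3_map12_Rop (t : X k L ⊗[k] (X k L ⊗[k] X k L)) :
    e3 (map12 (Rop k L) t) = e3 t := by
  induction t using TensorProduct.induction_on with
  | zero => simp
  | tmul u s =>
      induction s using TensorProduct.induction_on with
      | zero => simp [tmul_zero]
      | tmul v w =>
          rw [e3_map12, ← LinearMap.comp_apply, e2_Rop, e3_tmul, e2_tmul, e2_tmul, mul_assoc]
      | add s₁ s₂ h₁ h₂ =>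
          simp only [tmul_add, map_add, h₁, h₂]
  | add s t hs ht => simp only [map_add, hs, ht]

lemma map12_Rop_tmul (u v w : X k L) :
    map12 (Rop k L) (u ⊗ₜ[k] (v ⊗ₜ[k] w))
      = v ⊗ₜ[k] (u ⊗ₜ[k] w)
        + (((1 : k), (0 : L)) : X k L) ⊗ₜ[k] ((((0 : k), ⁅u.2, v.2⁆) : X k L) ⊗ₜ[k] w) := by
  have : map12 (Rop k L) (u ⊗ₜ[k] (v ⊗ₜ[k] w))
      = (TensorProduct.assoc k (X k L) (X k L) (X k L)) ((Rop k L (u ⊗ₜ[k] v)) ⊗ₜ[k] w) := by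
    simp [map12, LinearMap.rTensor_tmul]
  rw [this, Rop_tmul, add_tmul, map_add]
  rfl

lemma map23_Rop_tmul (u v w : X k L) :
    map23 (Rop k L) (u ⊗ₜ[k] (v ⊗ₜ[k] w))
      = u ⊗ₜ[k] (w ⊗ₜ[k] v)
        + u ⊗ₜ[k] ((((1 : k), (0 : L)) : X k L) ⊗ₜ[k] (((0 : k), ⁅v.2, w.2⁆) : X k L)) := by
  rw [show map23 (Rop k L) (u ⊗ₜ[k] (v ⊗ₜ[k] w)) = u ⊗ₜ[k] (Rop k L (v ⊗ₜ[k] w)) from rfl,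
    Rop_tmul, tmul_add]

lemma sub_apply' {k : Type*} [CommRing k] {V : Type*} [AddCommGroup V] [Module k V]
    (f g : V ⊗[k] (V ⊗[k] V) →ₗ[k] V ⊗[k] (V ⊗[k] V))
    (t : V ⊗[k] (V ⊗[k] V)) : (f - g) t = f t - g t := rfl

end Aux

lemma alphaOf_eq {k : Type*} [Field k] {L : Type*} [LieRing L] [LieAlgebra k L]
    (φ : X k L ⊗[k] X k L →ₗ[k] X k L ⊗[k] X k L) (x y : L) :
    alphaOf φ x y = e2 (φ ((((0 : k), x) : X k L) ⊗ₜ[k] (((0 : k), y) : X k L))) := rfl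

/-- For a perfect Lie algebra with trivial center over a field of characteristic 0
and a YB 2-cocycle `φ` for the associated Yang-Baxter operator, the scalar part
`α` is a Lie algebra 2-cocycle with trivial coefficients. -/
theorem alpha_is_lie_cocycle {k : Type*} [Field k] [CharZero k] {L : Type*}
    [LieRing L] [LieAlgebra k L]
    (hperf : ⁅(⊤ : LieIdeal k L), (⊤ : LieIdeal k L)⁆ = ⊤)
    (hcenter : LieAlgebra.center k L = ⊥)
    (φ : X k L ⊗[k] X k L →ₗ[k] X k L ⊗[k] X k L)
    (hφ : dYB (Rop k L) φ = 0) :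
    ∀ x y z : L, alphaOf φ ⁅x, y⁆ z = alphaOf φ ⁅x, z⁆ y + alphaOf φ x ⁅y, z⁆ := by
  intro x y z
  rw [dYB] at hφ
  have h := congrArg
    (fun F : X k L ⊗[k] (X k L ⊗[k] X k L) →ₗ[k] X k L ⊗[k] (X k L ⊗[k] X k L) =>
      e3 (F ((((0 : k), x) : X k L) ⊗ₜ[k]
        ((((0 : k), y) : X k L) ⊗ₜ[k] (((0 : k), z) : X k L))))) hφ
  simp only [sub_apply', LinearMap.add_apply, LinearMap.comp_apply, LinearMap.zero_apply,
    map_sub, map_add] at h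
  simp only [e3_map12_Rop, e3_map23_Rop] at h
  simp only [map12_Rop_tmul, map23_Rop_tmul, map_add, tmul_add, e3_map12, e3_map23,
    lie_zero, zero_lie, Prod.mk_zero_zero, zero_tmul, tmul_zero, map_zero, e3_tmul,
    e2_tmul, ← alphaOf_eq] at h
  simp only [mul_zero, zero_mul, one_mul, zero_add, add_zero, sub_zero, zero_sub] at h
  exact sub_eq_zero.mp h
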